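/- Let D ∈ ℝ^{n×n} be diagonal with positive entries and B ∈ ℝ^{n×m} with full column rank, and let c_s > 0. Then the matrix M_{vp} = [[D, B],[−Bᵀ, c_s D_p − Bᵀ D^{-1} B]], where D_p = diag(Bᵀ D^{-1} B), is invertible, and its inverse can be computed by solving two diagonal systems: x_p = (c_s D_p)^{-1}(F_p + Bᵀ D^{-1} F_v) and x_u = D^{-1}(F_v − B x_p). -/

import Mathlib

open Matrix


/-- Invertibility of the fully diagonalized matrix `M_{vp}` and the explicit
two-step diagonal solve: `x_p = (c_s D_p)⁻¹ (F_p + Bᵀ D⁻¹ F_v)` and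
`x_u = D⁻¹ (F_v − B x_p)` solve `M_{vp} [x_u; x_p] = [F_v; F_p]`. -/
theorem stmt9
    {n m : ℕ} (dv : Fin n → ℝ) (hdv : ∀ i, 0 < dv i)
    (B : Matrix (Fin n) (Fin m) ℝ) (hB : Function.Injective B.mulVec)
    (cs : ℝ) (hcs : 0 < cs) :
    letI D : Matrix (Fin n) (Fin n) ℝ := Matrix.diagonal dv
    letI Dinv : Matrix (Fin n) (Fin n) ℝ := Matrix.diagonal fun i => (dv i)⁻¹
    letI Dp : Matrix (Fin m) (Fin m) ℝ :=
      Matrix.diagonal fun j => (B.transpose * Dinv * B) j j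
    letI Mvp := Matrix.fromBlocks D B (-B.transpose) (cs • Dp - B.transpose * Dinv * B)
    IsUnit Mvp ∧
      ∀ Fv : Fin n → ℝ, ∀ Fp : Fin m → ℝ,
        letI xp : Fin m → ℝ :=
          fun j => (cs * (B.transpose * Dinv * B) j j)⁻¹ *
            (Fp + (B.transpose * Dinv).mulVec Fv) j
        letI xu : Fin n → ℝ := fun i => (dv i)⁻¹ * (Fv - B.mulVec xp) i
        Mvp.mulVec (Sum.elim xu xp) = Sum.elim Fv Fp := by
  set Dinv : Matrix (Fin n) (Fin n) ℝ := Matrix.diagonal fun i => (dv i)⁻¹ with hDinv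
  set A : Matrix (Fin m) (Fin m) ℝ := B.transpose * Dinv * B with hA
  have hcol : ∀ j, ∃ i, B i j ≠ 0 := by
    intro j
    by_contra h
    push_neg at h
    have h0 : B.mulVec (Pi.single j 1) = B.mulVec 0 := by
      funext i
      simp [Matrix.mulVec_single, Matrix.mulVec_zero, h]
    have := hB h0
    simpa using congrFun this j
  have hd : ∀ j, 0 < A j j := by
    intro j
    obtain ⟨i0, hi0⟩ := hcol j
    have hrw : A j j = ∑ i, (dv i)⁻¹ * (B i j) ^ 2 := by
      rw [hA, hDinv, Matrix.mul_apply]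
      congr 1
      funext i
      rw [Matrix.mul_apply]
      simp [Matrix.transpose_apply, Matrix.diagonal_apply, Finset.sum_ite_eq]
      ring
    rw [hrw]
    apply Finset.sum_pos'
      (fun i _ => mul_nonneg (inv_nonneg.2 (hdv i).le) (sq_nonneg _))
    exact ⟨i0, Finset.mem_univ i0,
      mul_pos (inv_pos.2 (hdv i0)) (pow_pos (abs_pos.2 hi0) 2 |>.trans_le (by rw [sq_abs]))⟩
  have hsolve : ∀ Fv : Fin n → ℝ, ∀ Fp : Fin m → ℝ,
      (Matrix.fromBlocks (Matrix.diagonal dv) B (-B.transpose)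
        (cs • (Matrix.diagonal fun j => A j j) - A)).mulVec
        (Sum.elim
          (fun i => (dv i)⁻¹ *
            ((Fv - B.mulVec (fun j => (cs * A j j)⁻¹ *
              (Fp + (B.transpose * Dinv).mulVec Fv) j)) i))
          (fun j => (cs * A j j)⁻¹ * (Fp + (B.transpose * Dinv).mulVec Fv) j))
        = Sum.elim Fv Fp := by
    intro Fv Fp
    set xp : Fin m → ℝ := fun j => (cs * A j j)⁻¹ * (Fp + (B.transpose * Dinv).mulVec Fv) j
      with hxp
    set xu : Fin n → ℝ := fun i => (dv i)⁻¹ * (Fv - B.mulVec xp) i with hxu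
    have hDxu : (Matrix.diagonal dv).mulVec xu = Fv - B.mulVec xp := by
      funext i
      rw [Matrix.mulVec_diagonal, hxu]
      field_simp [(hdv i).ne']
    funext x
    cases x with
    | inl i =>
      simp only [Matrix.fromBlocks_mulVec, Sum.elim_inl, Sum.elim_comp_inl,
        Sum.elim_comp_inr, Pi.add_apply, hDxu, Pi.sub_apply]
      ring
    | inr j =>
      have hxu' : xu = Dinv.mulVec (Fv - B.mulVec xp) := by
        funext i
        simp [hxu, hDinv, Matrix.mulVec_diagonal]
      have hBt : B.transpose.mulVec xu
          = (B.transpose * Dinv).mulVec Fv - A.mulVec xp := by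
        simp [hxu', Matrix.mulVec_sub, Matrix.mulVec_mulVec, hA, Matrix.mul_assoc]
      simp only [Matrix.fromBlocks_mulVec, Sum.elim_inr, Sum.elim_comp_inl,
        Sum.elim_comp_inr, Pi.add_apply, Matrix.neg_mulVec, Pi.neg_apply, hBt,
        Matrix.sub_mulVec, Pi.sub_apply, Matrix.smul_mulVec, Pi.smul_apply,
        Matrix.mulVec_diagonal, smul_eq_mul]
      have hne : cs * A j j ≠ 0 := (mul_pos hcs (hd j)).ne'
      have hxpj : xp j = (cs * A j j)⁻¹ * (Fp + (B.transpose * Dinv).mulVec Fv) j := rfl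
      rw [hxpj]
      field_simp [(hd j).ne']
      rw [Pi.add_apply]
      ring
  constructor
  · rw [← Matrix.mulVec_surjective_iff_isUnit]
    intro y
    refine ⟨_, (hsolve (fun i => y (Sum.inl i)) (fun j => y (Sum.inr j))).trans ?_⟩
    funext x; cases x <;> rfl
  · exact hsolve
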